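/- Let G be a P5-free graph, let C ⊆ V(G), and let C = C_L ⊎ C_R be a partition of C such that C_L and C_R are both independent sets in G. Let D ⊆ C, set D_L = D ∩ C_L and D_R = D ∩ C_R, and assume: D_L ≠ ∅, D_R ≠ ∅, every vertex of D_L is adjacent in G to every vertex of D_R, C ⊆ N[D], and moreover N(D_L) ∩ N(D_R) = ∅. Let Y = V(G) \ N[C]. Then the vertex set of every connected component of the induced subgraph G[Y] is a module in G. -/

import Mathlib

open SimpleGraph

/-- A graph is `P₅`-free if it contains no induced subgraph isomorphic to the
path on five vertices (i.e. no graph embedding of `pathGraph 5`). -/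
def P5Free {V : Type*} (G : SimpleGraph V) : Prop :=
  IsEmpty (SimpleGraph.pathGraph 5 ↪g G)

/-- `N(A)`: the set of vertices outside `A` with a neighbor in `A`. -/
def nbhdSet {V : Type*} (G : SimpleGraph V) (A : Set V) : Set V :=
  {v | v ∉ A ∧ ∃ a ∈ A, G.Adj v a}

/-- `N[A] = N(A) ∪ A`. -/
def closedNbhdSet {V : Type*} (G : SimpleGraph V) (A : Set V) : Set V :=
  nbhdSet G A ∪ A

/-- A set of vertices is independent in `G`. -/
def SetIndep {V : Type*} (G : SimpleGraph V) (A : Set V) : Prop :=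
  ∀ x ∈ A, ∀ y ∈ A, ¬ G.Adj x y

/-- `M` is a module in `G`: every vertex outside `M` is adjacent to all of `M`
or to none of `M`. -/
def IsModule {V : Type*} (G : SimpleGraph V) (M : Set V) : Prop :=
  ∀ u ∉ M, (∀ m ∈ M, G.Adj u m) ∨ (∀ m ∈ M, ¬ G.Adj u m)

/-- Along any walk from a vertex satisfying `P` to one not satisfying `P`,
there is an edge whose endpoints flip `P`. -/
lemma walk_flip {V : Type*} {G : SimpleGraph V} (P : V → Prop) :
    ∀ {a b : V}, G.Walk a b → P a → ¬ P b →
      ∃ x y, G.Adj x y ∧ P x ∧ ¬ P y := by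
  intro a b p
  induction p with
  | nil => intro h h'; exact absurd h h'
  | @cons a c b h p ih =>
    intro ha hb
    by_cases hc : P c
    · exact ih hc hb
    · exact ⟨a, c, h, ha, hc⟩

/-- Build a `P₅` embedding from five vertices forming an induced path. -/
def p5Embed {V : Type*} {G : SimpleGraph V} {v0 v1 v2 v3 v4 : V}
    (a01 : G.Adj v0 v1) (a12 : G.Adj v1 v2) (a23 : G.Adj v2 v3) (a34 : G.Adj v3 v4)
    (n02 : ¬G.Adj v0 v2) (n03 : ¬G.Adj v0 v3) (n04 : ¬G.Adj v0 v4)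
    (n13 : ¬G.Adj v1 v3) (n14 : ¬G.Adj v1 v4) (n24 : ¬G.Adj v2 v4)
    (ne02 : v0 ≠ v2) (ne03 : v0 ≠ v3) (ne04 : v0 ≠ v4)
    (ne13 : v1 ≠ v3) (ne14 : v1 ≠ v4) (ne24 : v2 ≠ v4) :
    SimpleGraph.pathGraph 5 ↪g G := by
  have ne01 := a01.ne
  have ne12 := a12.ne
  have ne23 := a23.ne
  have ne34 := a34.ne
  refine ⟨⟨![v0, v1, v2, v3, v4], ?_⟩, ?_⟩
  · intro i j hij
    fin_cases i <;> fin_cases j <;> simp_all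
  · intro i j
    change G.Adj (![v0, v1, v2, v3, v4] i) (![v0, v1, v2, v3, v4] j) ↔ _
    fin_cases i <;> fin_cases j <;>
      simp only [Matrix.cons_val_zero, Matrix.cons_val_one, Matrix.head_cons,
        Matrix.cons_val_fin_one, SimpleGraph.pathGraph_adj] <;>
      simp_all [G.adj_comm]

theorem components_of_Y_are_modules
    {V : Type*} [Fintype V] (G : SimpleGraph V) (hP5 : P5Free G)
    (C CL CR D : Set V)
    (hpart : CL ∪ CR = C) (hLR : Disjoint CL CR)
    (hCLind : SetIndep G CL) (hCRind : SetIndep G CR)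
    (hDC : D ⊆ C)
    (hDL : (D ∩ CL).Nonempty) (hDR : (D ∩ CR).Nonempty)
    (hDadj : ∀ x ∈ D ∩ CL, ∀ y ∈ D ∩ CR, G.Adj x y)
    (hdom : C ⊆ closedNbhdSet G D)
    (hsep : nbhdSet G (D ∩ CL) ∩ nbhdSet G (D ∩ CR) = ∅) :
    ∀ c : (G.induce ((Set.univ : Set V) \ closedNbhdSet G C)).ConnectedComponent,
      IsModule G (Subtype.val '' c.supp) := by
  set Y : Set V := (Set.univ : Set V) \ closedNbhdSet G C with hY
  have hCLC : CL ⊆ C := hpart ▸ Set.subset_union_left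
  have hCRC : CR ⊆ C := hpart ▸ Set.subset_union_right
  have hDLC : D ∩ CL ⊆ C := fun x hx => hCLC hx.2
  have hDRC : D ∩ CR ⊆ C := fun x hx => hCRC hx.2
  -- a vertex outside C cannot have neighbors in both D∩CL and D∩CR
  have hnonadj : ∀ u, u ∉ C → ∀ a ∈ D ∩ CL, G.Adj u a → ∀ b ∈ D ∩ CR, ¬ G.Adj u b := by
    intro u hu a ha hua b hb hub
    have : u ∈ nbhdSet G (D ∩ CL) ∩ nbhdSet G (D ∩ CR) :=
      ⟨⟨fun h => hu (hDLC h), a, ha, hua⟩, ⟨fun h => hu (hDRC h), b, hb, hub⟩⟩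
    simp [hsep] at this
  -- key: a vertex outside C with a neighbor in C has an "asymmetric cherry" into C
  have key : ∀ u, u ∉ C → ∀ c ∈ C, G.Adj u c →
      ∃ a ∈ C, ∃ b ∈ C, G.Adj u a ∧ G.Adj a b ∧ ¬ G.Adj u b := by
    intro u hu c hcC huc
    rcases hdom hcC with hcN | hcD
    · -- c ∉ D but has a neighbor d ∈ D
      obtain ⟨hcD, d, hdD, hcd⟩ := hcN
      have hdCC : d ∈ CL ∪ CR := hpart ▸ hDC hdD
      rcases hdCC with hdL | hdR
      · by_cases hud : G.Adj u d
        · obtain ⟨e, heD⟩ := hDR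
          exact ⟨d, hCLC hdL, e, hDRC heD, hud, hDadj d ⟨hdD, hdL⟩ e heD,
            hnonadj u hu d ⟨hdD, hdL⟩ hud e heD⟩
        · exact ⟨c, hcC, d, hCLC hdL, huc, hcd, hud⟩
      · by_cases hud : G.Adj u d
        · obtain ⟨e, heD⟩ := hDL
          exact ⟨d, hCRC hdR, e, hDLC heD, hud, (hDadj e heD d ⟨hdD, hdR⟩).symm,
            fun h => hnonadj u hu e heD h d ⟨hdD, hdR⟩ hud⟩
        · exact ⟨c, hcC, d, hCRC hdR, huc, hcd, hud⟩
    · -- c ∈ D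
      have hcCC : c ∈ CL ∪ CR := hpart ▸ hDC hcD
      rcases hcCC with hcL | hcR
      · obtain ⟨e, heD⟩ := hDR
        exact ⟨c, hcC, e, hDRC heD, huc, hDadj c ⟨hcD, hcL⟩ e heD,
          hnonadj u hu c ⟨hcD, hcL⟩ huc e heD⟩
      · obtain ⟨e, heD⟩ := hDL
        exact ⟨c, hcC, e, hDLC heD, huc, (hDadj e heD c ⟨hcD, hcR⟩).symm,
          fun h => hnonadj u hu e heD h c ⟨hcD, hcR⟩ huc⟩
  -- Y vertices have no neighbors in C and are not in C
  have hYnC : ∀ y ∈ Y, y ∉ C := by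
    intro y hy hyC
    exact hy.2 (Or.inr hyC)
  have hYadj : ∀ y ∈ Y, ∀ c ∈ C, ¬ G.Adj y c := by
    intro y hy c hcC hadj
    exact hy.2 (Or.inl ⟨hYnC y hy, c, hcC, hadj⟩)
  intro comp u hu
  by_contra hmod
  push_neg at hmod
  obtain ⟨⟨m1, hm1⟩, ⟨m2, hm2⟩⟩ := hmod
  obtain ⟨⟨y1', hy1'Y⟩, hy1's, hy1'⟩ := hm2.1
  obtain ⟨⟨y2', hy2'Y⟩, hy2's, hy2'⟩ := hm1.1
  have hadj1 : G.Adj u y1' := by rw [show y1' = m2 from hy1']; exact hm2.2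
  have hnadj2 : ¬ G.Adj u y2' := by rw [show y2' = m1 from hy2']; exact hm1.2
  -- u is not in Y
  have huY : u ∉ Y := by
    intro huYmem
    apply hu
    have hconn : (G.induce Y).Adj ⟨u, huYmem⟩ ⟨y1', hy1'Y⟩ := by
      simpa using hadj1
    have : (G.induce Y).connectedComponentMk ⟨u, huYmem⟩ = comp := by
      rw [SimpleGraph.ConnectedComponent.connectedComponentMk_eq_of_adj hconn]
      exact (SimpleGraph.ConnectedComponent.mem_supp_iff _ _).mp hy1's
    exact ⟨⟨u, huYmem⟩, (SimpleGraph.ConnectedComponent.mem_supp_iff _ _).mpr this, rfl⟩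
  -- so u ∈ N[C]; u ∉ C since it has a neighbor in Y
  have huNC : u ∈ closedNbhdSet G C := by
    by_contra h
    exact huY ⟨trivial, h⟩
  have huC : u ∉ C := fun huC => hYadj y1' hy1'Y u huC hadj1.symm
  have huN : ∃ c ∈ C, G.Adj u c := by
    rcases huNC with h | h
    · exact h.2
    · exact absurd h huC
  obtain ⟨c0, hc0C, huc0⟩ := huN
  obtain ⟨a, haC, b, hbC, hua, hab, hub⟩ := key u huC c0 hc0C huc0
  -- find a flipping edge along a walk inside the component
  have hreach : (G.induce Y).Reachable ⟨y1', hy1'Y⟩ ⟨y2', hy2'Y⟩ := by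
    apply SimpleGraph.ConnectedComponent.exact
    rw [(SimpleGraph.ConnectedComponent.mem_supp_iff _ _).mp hy1's,
      (SimpleGraph.ConnectedComponent.mem_supp_iff _ _).mp hy2's]
  obtain ⟨p⟩ := hreach
  obtain ⟨x, y, hxy, hPx, hPy⟩ := walk_flip (G := G.induce Y) (fun z => G.Adj u (z : V)) p hadj1 hnadj2
  -- the five vertices of the induced P5
  set v0 : V := (y : V) with hv0
  set v1 : V := (x : V) with hv1
  have hy1Y : v1 ∈ Y := x.2
  have hy0Y : v0 ∈ Y := y.2
  have h10 : G.Adj v1 v0 := by simpa using hxy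
  have hu1 : G.Adj u v1 := hPx
  have hu0 : ¬ G.Adj u v0 := hPy
  -- distinctness
  have ne01 : v0 ≠ v1 := h10.ne.symm
  have ne02 : v0 ≠ u := fun h => huY (h ▸ hy0Y)
  have ne03 : v0 ≠ a := fun h => hYnC v0 hy0Y (h ▸ haC)
  have ne04 : v0 ≠ b := fun h => hYnC v0 hy0Y (h ▸ hbC)
  have ne12 : v1 ≠ u := fun h => huY (h ▸ hy1Y)
  have ne13 : v1 ≠ a := fun h => hYnC v1 hy1Y (h ▸ haC)
  have ne14 : v1 ≠ b := fun h => hYnC v1 hy1Y (h ▸ hbC)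
  have ne23 : u ≠ a := fun h => huC (h ▸ haC)
  have ne24 : u ≠ b := fun h => huC (h ▸ hbC)
  have ne34 : a ≠ b := hab.ne
  -- non-adjacencies
  have na03 : ¬ G.Adj v0 a := hYadj v0 hy0Y a haC
  have na04 : ¬ G.Adj v0 b := hYadj v0 hy0Y b hbC
  have na13 : ¬ G.Adj v1 a := hYadj v1 hy1Y a haC
  have na14 : ¬ G.Adj v1 b := hYadj v1 hy1Y b hbC
  -- build the P5 embedding v0 - v1 - u - a - b
  exact hP5.false (p5Embed h10.symm hu1.symm hua hab
    (fun h => hu0 h.symm) na03 na04 na13 na14 hub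
    ne02 ne03 ne04 ne13 ne14 ne24)
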